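/- Let D be a semi-complete digraph containing the bidirected star ↔S4 on four vertices as a subdigraph. Then D is 3-dicritical if and only if D is isomorphic to the directed wheel W3. -/

import Mathlib

/-- A (loopless, simple) digraph on vertex type `V`. -/
structure SimpleDigraph (V : Type) where
  Adj : V → V → Prop
  loopless : ∀ v, ¬ Adj v v

namespace SimpleDigraph

/-- A set of arcs (given as a relation) is acyclic if it admits no directed closed walk. -/
def AcyclicRel {V : Type} (A : V → V → Prop) : Prop :=
  ∀ v, ¬ Relation.TransGen A v v

/-- A set of arcs is 2-dicolourable if the vertices can be coloured with two colours
so that each colour class induces an acyclic subdigraph. -/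
def Dicolourable2Rel {V : Type} (A : V → V → Prop) : Prop :=
  ∃ φ : V → Fin 2, ∀ i : Fin 2,
    AcyclicRel (fun a b => A a b ∧ φ a = i ∧ φ b = i)

/-- A digraph is 2-dicolourable if its vertices can be coloured with two colours
so that each colour class induces an acyclic subdigraph. -/
def Dicolourable2 {V : Type} (D : SimpleDigraph V) : Prop :=
  Dicolourable2Rel D.Adj

/-- `(S, A)` describes a subdigraph of `D`: its vertex set is `S` and its arcs
are given by `A`, which must join vertices of `S` and be arcs of `D`. -/
def IsSubdigraphOn {V : Type} (D : SimpleDigraph V) (S : Set V) (A : V → V → Prop) : Prop :=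
  ∀ u v, A u v → u ∈ S ∧ v ∈ S ∧ D.Adj u v

/-- `D` is 3-dicritical: `D` is not 2-dicolourable, but every proper subdigraph of `D`
(one missing a vertex or an arc) is 2-dicolourable. -/
def Dicritical3 {V : Type} (D : SimpleDigraph V) : Prop :=
  ¬ D.Dicolourable2 ∧
    ∀ (S : Set V) (A : V → V → Prop), D.IsSubdigraphOn S A →
      (S ≠ Set.univ ∨ A ≠ D.Adj) → Dicolourable2Rel A

/-- A digraph is semi-complete if any two distinct vertices are joined by at least one arc. -/
def SemiComplete {V : Type} (D : SimpleDigraph V) : Prop :=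
  ∀ u v : V, u ≠ v → D.Adj u v ∨ D.Adj v u

/-- A tournament is a semi-complete digraph with no digon. -/
def IsTournament {V : Type} (D : SimpleDigraph V) : Prop :=
  D.SemiComplete ∧ ∀ u v : V, ¬ (D.Adj u v ∧ D.Adj v u)

/-- Isomorphism of digraphs. -/
def Iso {V W : Type} (D : SimpleDigraph V) (E : SimpleDigraph W) : Prop :=
  ∃ e : V ≃ W, ∀ u v : V, D.Adj u v ↔ E.Adj (e u) (e v)

/-- `D` contains (a copy of) `H` as a subdigraph. -/
def ContainsSub {V W : Type} (D : SimpleDigraph V) (H : SimpleDigraph W) : Prop :=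
  ∃ f : W → V, Function.Injective f ∧ ∀ a b, H.Adj a b → D.Adj (f a) (f b)

/-- `D` contains (a copy of) `H` as an induced subdigraph. -/
def ContainsInduced {V W : Type} (D : SimpleDigraph V) (H : SimpleDigraph W) : Prop :=
  ∃ f : W → V, Function.Injective f ∧ ∀ a b, H.Adj a b ↔ D.Adj (f a) (f b)

end SimpleDigraph

/-- An auxiliary constructor: the digraph on `Fin n` whose arcs are the pairs in `l`. -/
def digraphOfPairs (n : ℕ) (l : List (ℕ × ℕ)) (h : ∀ v : Fin n, (v.val, v.val) ∉ l) :
    SimpleDigraph (Fin n) :=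
  ⟨fun u v => (u.val, v.val) ∈ l, h⟩

/-- The bidirected complete graph `↔K2` on two vertices (a digon). -/
def biK2 : SimpleDigraph (Fin 2) :=
  ⟨fun u v => u ≠ v, fun v h => h rfl⟩

/-- The bidirected complete graph `↔K3` on three vertices. -/
def biK3 : SimpleDigraph (Fin 3) :=
  ⟨fun u v => u ≠ v, fun v h => h rfl⟩

/-- The directed cycle `C3` on three vertices. -/
def dirC3 : SimpleDigraph (Fin 3) :=
  ⟨fun u v => v = u + 1, by decide⟩

/-- The directed wheel `W3`: a directed triangle `0 → 1 → 2 → 0` together with a hub `3`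
joined by a digon to each triangle vertex. -/
def dirW3 : SimpleDigraph (Fin 4) :=
  digraphOfPairs 4 [(3,0),(0,3),(3,1),(1,3),(3,2),(2,3),(0,1),(1,2),(2,0)] (by decide)

/-- The digraph `H5` on vertices `u0, …, u4`: digons between `u0,u1` and between `u0,u4`,
and simple arcs `u4u1, u1u3, u1u2, u3u4, u2u4, u3u0, u0u2, u2u3`. -/
def digraphH5 : SimpleDigraph (Fin 5) :=
  digraphOfPairs 5 [(0,1),(1,0),(0,4),(4,0),(4,1),(1,3),(1,2),(3,4),(2,4),(3,0),(0,2),(2,3)]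
    (by decide)

/-- The Paley tournament `P7` on `ℤ/7ℤ`: an arc from `i` to `j` iff `j - i ∈ {1, 2, 4}`. -/
def dirP7 : SimpleDigraph (Fin 7) :=
  ⟨fun i j => j - i = 1 ∨ j - i = 2 ∨ j - i = 4, by decide⟩

/-- The rotative digraph `R(↔K2, ↔K2)`: digons `{0,1}` and `{2,3}`, all arcs from `{0,1}`
to `{2,3}`, all arcs from `{2,3}` to the extra vertex `4`, all arcs from `4` to `{0,1}`. -/
def rotK2K2 : SimpleDigraph (Fin 5) :=
  digraphOfPairs 5 [(0,1),(1,0),(2,3),(3,2),(0,2),(0,3),(1,2),(1,3),(2,4),(3,4),(4,0),(4,1)]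
    (by decide)

/-- The rotative digraph `R(↔K2, C3)`. -/
def rotK2C3 : SimpleDigraph (Fin 6) :=
  digraphOfPairs 6 [(0,1),(1,0),(2,3),(3,4),(4,2),(0,2),(0,3),(0,4),(1,2),(1,3),(1,4),
    (2,5),(3,5),(4,5),(5,0),(5,1)] (by decide)

/-- The rotative digraph `R(C3, ↔K2)`. -/
def rotC3K2 : SimpleDigraph (Fin 6) :=
  digraphOfPairs 6 [(0,1),(1,2),(2,0),(3,4),(4,3),(0,3),(0,4),(1,3),(1,4),(2,3),(2,4),
    (3,5),(4,5),(5,0),(5,1),(5,2)] (by decide)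

/-- The rotative digraph `R(C3, C3)`. -/
def rotC3C3 : SimpleDigraph (Fin 7) :=
  digraphOfPairs 7 [(0,1),(1,2),(2,0),(3,4),(4,5),(5,3),(0,3),(0,4),(0,5),(1,3),(1,4),(1,5),
    (2,3),(2,4),(2,5),(3,6),(4,6),(5,6),(6,0),(6,1),(6,2)] (by decide)

/-- The bidirected star `↔S4` on four vertices: the centre `0` is joined by a digon to
each of `1`, `2`, `3`. -/
def biS4 : SimpleDigraph (Fin 4) :=
  digraphOfPairs 4 [(0,1),(1,0),(0,2),(2,0),(0,3),(3,0)] (by decide)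

open Relation SimpleDigraph

instance (a b : Fin 4) : Decidable (dirW3.Adj a b) :=
  decidable_of_iff ((a.val, b.val) ∈ [(3,0),(0,3),(3,1),(1,3),(3,2),(2,3),(0,1),(1,2),(2,0)]) Iff.rfl

instance (a b : Fin 4) : Decidable (biS4.Adj a b) :=
  decidable_of_iff ((a.val, b.val) ∈ [(0,1),(1,0),(0,2),(2,0),(0,3),(3,0)]) Iff.rfl

lemma acyclic_of_rank {V : Type} {A : V → V → Prop} (f : V → ℕ)
    (h : ∀ a b, A a b → f a < f b) : AcyclicRel A := by
  intro v hv
  have key : ∀ a b, Relation.TransGen A a b → f a < f b := by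
    intro a b hab
    induction hab with
    | single h' => exact h _ _ h'
    | tail _ h' ih => exact ih.trans (h _ _ h')
  exact absurd (key v v hv) (lt_irrefl _)

lemma colourable_of_ranks {V : Type} {A : V → V → Prop} (φ : V → Fin 2) (f g : V → ℕ)
    (h0 : ∀ a b, A a b → φ a = 0 → φ b = 0 → f a < f b)
    (h1 : ∀ a b, A a b → φ a = 1 → φ b = 1 → g a < g b) :
    Dicolourable2Rel A := by
  refine ⟨φ, fun i => ?_⟩
  fin_cases i
  · exact acyclic_of_rank f (fun a b h => h0 a b h.1 h.2.1 h.2.2)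
  · exact acyclic_of_rank g (fun a b h => h1 a b h.1 h.2.1 h.2.2)

lemma colourable_pullback {V W : Type} {A : V → V → Prop} {B : W → W → Prop} (g : V → W)
    (hg : ∀ a b, A a b → B (g a) (g b)) (hB : Dicolourable2Rel B) : Dicolourable2Rel A := by
  obtain ⟨ψ, hψ⟩ := hB
  refine ⟨fun v => ψ (g v), fun i v hv => ?_⟩
  exact hψ i (g v) (Relation.TransGen.lift g (fun a b h => (⟨hg a b h.1, h.2.1, h.2.2⟩ : (fun a b => B a b ∧ ψ a = i ∧ ψ b = i) (g a) (g b))) _ _ hv)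

lemma digon_ne {V : Type} {A : V → V → Prop} {φ : V → Fin 2}
    (hφ : ∀ i : Fin 2, AcyclicRel (fun a b => A a b ∧ φ a = i ∧ φ b = i))
    {u v : V} (huv : A u v) (hvu : A v u) : φ u ≠ φ v := by
  intro he
  exact hφ (φ u) u (TransGen.tail (TransGen.single ⟨huv, rfl, he.symm⟩) ⟨hvu, he.symm, rfl⟩)

lemma fin2_pigeon : ∀ a b c : Fin 2, a ≠ b → a ≠ c → b = c := by decide

lemma pattern_not_col {V : Type} {A : V → V → Prop} {c a b d : V}
    (hca : A c a) (hac : A a c) (hcb : A c b) (hbc : A b c) (hcd : A c d) (hdc : A d c)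
    (hab : A a b) (hbd : A b d) (hda : A d a) : ¬ Dicolourable2Rel A := by
  rintro ⟨φ, hφ⟩
  have h1 := digon_ne hφ hca hac
  have h2 := digon_ne hφ hcb hbc
  have h3 := digon_ne hφ hcd hdc
  have hb : φ a = φ b := fin2_pigeon _ _ _ h1 h2
  have hd : φ a = φ d := fin2_pigeon _ _ _ h1 h3
  exact hφ (φ a) a
    (TransGen.tail (TransGen.tail (TransGen.single ⟨hab, rfl, hb.symm⟩)
      ⟨hbd, hb.symm, hd.symm⟩) ⟨hda, hd.symm, rfl⟩)

lemma transGen_decomp {V : Type} {S : V → V → Prop} {a b x y : V}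
    (h : Relation.TransGen (fun p q => S p q ∨ (p = a ∧ q = b)) x y) :
    Relation.TransGen S x y ∨ (Relation.ReflTransGen S x a ∧ Relation.ReflTransGen S b y) := by
  induction h with
  | single h' =>
    rcases h' with h' | ⟨rfl, rfl⟩
    · exact Or.inl (TransGen.single h')
    · exact Or.inr ⟨ReflTransGen.refl, ReflTransGen.refl⟩
  | tail _ h' ih =>
    rcases h' with h' | ⟨rfl, rfl⟩
    · rcases ih with ih | ⟨ih1, ih2⟩
      · exact Or.inl (ih.tail h')
      · exact Or.inr ⟨ih1, ih2.tail h'⟩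
    · rcases ih with ih | ⟨ih1, ih2⟩
      · exact Or.inr ⟨ih.to_reflTransGen, ReflTransGen.refl⟩
      · exact Or.inr ⟨ih1, ReflTransGen.refl⟩

lemma w3_minus_colourable (p q : Fin 4) (h : dirW3.Adj p q) :
    Dicolourable2Rel (fun x y => dirW3.Adj x y ∧ ¬(x = p ∧ y = q)) := by
  fin_cases p <;> fin_cases q <;>
    first
      | exact absurd h (by decide)
      | exact colourable_of_ranks ![0,0,0,1] ![2,0,1,0] ![0,0,0,0] (by decide) (by decide)
      | exact colourable_of_ranks ![0,0,0,1] ![1,2,0,0] ![0,0,0,0] (by decide) (by decide)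
      | exact colourable_of_ranks ![0,0,0,1] ![0,1,2,0] ![0,0,0,0] (by decide) (by decide)
      | exact colourable_of_ranks ![0,1,1,0] ![0,0,0,1] ![0,0,1,0] (by decide) (by decide)
      | exact colourable_of_ranks ![0,1,1,0] ![1,0,0,0] ![0,0,1,0] (by decide) (by decide)
      | exact colourable_of_ranks ![1,0,1,0] ![0,0,0,1] ![1,0,0,0] (by decide) (by decide)
      | exact colourable_of_ranks ![1,0,1,0] ![0,1,0,0] ![1,0,0,0] (by decide) (by decide)
      | exact colourable_of_ranks ![1,1,0,0] ![0,0,0,1] ![0,1,0,0] (by decide) (by decide)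
      | exact colourable_of_ranks ![1,1,0,0] ![0,0,1,0] ![0,1,0,0] (by decide) (by decide)
lemma trans_case {V : Type} (D : SimpleDigraph V)
    (hnc : ¬ D.Dicolourable2)
    (hdel : ∀ (S : Set V) (A : V → V → Prop), D.IsSubdigraphOn S A →
      (S ≠ Set.univ ∨ A ≠ D.Adj) → Dicolourable2Rel A)
    (c s m t : V)
    (hcs : D.Adj c s) (hsc' : D.Adj s c) (hcm : D.Adj c m) (hmc : D.Adj m c)
    (hct : D.Adj c t) (htc : D.Adj t c)
    (hsm : D.Adj s m) (hmt : D.Adj m t) (hst : D.Adj s t)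
    (ncs : c ≠ s) (nct : c ≠ t) (nsm : s ≠ m) (nmt : m ≠ t) : False := by
  set A : V → V → Prop := fun u v => D.Adj u v ∧ ¬(u = s ∧ v = t) with hAdef
  have hsub : D.IsSubdigraphOn Set.univ A := fun u v h => ⟨trivial, trivial, h.1⟩
  have hne : A ≠ D.Adj := by
    intro h
    have : A s t := by rw [h]; exact hst
    exact this.2 ⟨rfl, rfl⟩
  obtain ⟨φ, hφ⟩ := hdel Set.univ A hsub (Or.inr hne)
  have h1 : φ c ≠ φ s := digon_ne hφ ⟨hcs, fun h => ncs h.1⟩ ⟨hsc', fun h => nct h.2⟩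
  have h2 : φ c ≠ φ m := digon_ne hφ ⟨hcm, fun h => ncs h.1⟩ ⟨hmc, fun h => nct h.2⟩
  have h3 : φ c ≠ φ t := digon_ne hφ ⟨hct, fun h => ncs h.1⟩ ⟨htc, fun h => nct h.2⟩
  have hsm2 : φ s = φ m := fin2_pigeon _ _ _ h1 h2
  have hst2 : φ s = φ t := fin2_pigeon _ _ _ h1 h3
  have hD : ¬ ∀ i : Fin 2, AcyclicRel (fun a b => D.Adj a b ∧ φ a = i ∧ φ b = i) :=
    fun h => hnc ⟨φ, h⟩
  obtain ⟨i, hi⟩ := not_forall.1 hD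
  obtain ⟨v, hv⟩ := not_forall.1 hi
  rw [not_not] at hv
  by_cases hic : φ s = i
  · have hv' : Relation.TransGen
        (fun x y => (A x y ∧ φ x = i ∧ φ y = i) ∨ (x = s ∧ y = t)) v v := by
      refine Relation.TransGen.mono (fun x y hxy => ?_) _ _ hv
      by_cases hxy' : x = s ∧ y = t
      · exact Or.inr hxy'
      · exact Or.inl ⟨⟨hxy.1, hxy'⟩, hxy.2.1, hxy.2.2⟩
    rcases transGen_decomp hv' with h' | ⟨h1', h2'⟩
    · exact hφ i v h'
    · have hmi : φ m = i := by rw [← hsm2]; exact hic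
      have hti : φ t = i := by rw [← hst2]; exact hic
      have a1 : A s m ∧ φ s = i ∧ φ m = i := ⟨⟨hsm, fun h => nmt h.2⟩, hic, hmi⟩
      have a2 : A m t ∧ φ m = i ∧ φ t = i := ⟨⟨hmt, fun h => nsm h.1.symm⟩, hmi, hti⟩
      exact hφ i t (Relation.TransGen.tail (Relation.TransGen.tail' (h2'.trans h1') a1) a2)
  · refine hφ i v (Relation.TransGen.mono (fun x y hxy => ?_) _ _ hv)
    exact ⟨⟨hxy.1, fun h => hic (h.1 ▸ hxy.2.1)⟩, hxy.2.1, hxy.2.2⟩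
def nineA {V : Type} (c a b d : V) : V → V → Prop := fun x y =>
    (x = c ∧ y = a) ∨ (x = a ∧ y = c) ∨ (x = c ∧ y = b) ∨ (x = b ∧ y = c) ∨
    (x = c ∧ y = d) ∨ (x = d ∧ y = c) ∨ (x = a ∧ y = b) ∨ (x = b ∧ y = d) ∨
    (x = d ∧ y = a)

lemma cyc_case {V : Type} (D : SimpleDigraph V) (hsc : D.SemiComplete)
    (hdel : ∀ (S : Set V) (A : V → V → Prop), D.IsSubdigraphOn S A →
      (S ≠ Set.univ ∨ A ≠ D.Adj) → Dicolourable2Rel A)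
    (c a b d : V)
    (hca : D.Adj c a) (hac : D.Adj a c) (hcb : D.Adj c b) (hbc : D.Adj b c)
    (hcd : D.Adj c d) (hdc : D.Adj d c)
    (hab : D.Adj a b) (hbd : D.Adj b d) (hda : D.Adj d a)
    (nca : c ≠ a) (ncb : c ≠ b) (ncd : c ≠ d) (nab : a ≠ b) (nad : a ≠ d) (nbd : b ≠ d) :
    D.Iso dirW3 := by
  have hnA : ¬ Dicolourable2Rel (nineA c a b d) := by
    apply pattern_not_col (c := c) (a := a) (b := b) (d := d) <;> simp [nineA]
  have hsub : D.IsSubdigraphOn Set.univ (nineA c a b d) := by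
    rintro u v (⟨rfl,rfl⟩|⟨rfl,rfl⟩|⟨rfl,rfl⟩|⟨rfl,rfl⟩|⟨rfl,rfl⟩|⟨rfl,rfl⟩|⟨rfl,rfl⟩|⟨rfl,rfl⟩|⟨rfl,rfl⟩) <;>
      exact ⟨trivial, trivial, by assumption⟩
  have heq : nineA c a b d = D.Adj := by
    by_contra h
    exact hnA (hdel Set.univ _ hsub (Or.inr h))
  have hall : ∀ v : V, v = c ∨ v = a ∨ v = b ∨ v = d := by
    intro v
    by_contra hv
    push_neg at hv
    obtain ⟨h1, h2, h3, h4⟩ := hv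
    rcases hsc v c h1 with h | h <;> rw [← heq] at h <;>
      simp [nineA, h1, h2, h3, h4, Ne.symm h2, Ne.symm h3, Ne.symm h4] at h
  let G : Fin 4 → V := fun p => match p with
    | 0 => a | 1 => b | 2 => d | 3 => c
  have hinj : Function.Injective G := by
    intro p q hpq
    fin_cases p <;> fin_cases q <;>
      first
        | rfl
        | exact absurd hpq nab | exact absurd hpq.symm nab
        | exact absurd hpq nad | exact absurd hpq.symm nad
        | exact absurd hpq nbd | exact absurd hpq.symm nbd
        | exact absurd hpq.symm nca | exact absurd hpq nca
        | exact absurd hpq.symm ncb | exact absurd hpq ncb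
        | exact absurd hpq.symm ncd | exact absurd hpq ncd
  have hbij : Function.Bijective G := by
    refine ⟨hinj, fun v => ?_⟩
    rcases hall v with rfl | rfl | rfl | rfl
    · exact ⟨3, rfl⟩
    · exact ⟨0, rfl⟩
    · exact ⟨1, rfl⟩
    · exact ⟨2, rfl⟩
  refine ⟨(Equiv.ofBijective G hbij).symm, fun u v => ?_⟩
  obtain ⟨p, rfl⟩ := hbij.2 u
  obtain ⟨q, rfl⟩ := hbij.2 v
  rw [show (Equiv.ofBijective G hbij).symm (G p) = p from Equiv.symm_apply_apply _ p,
    show (Equiv.ofBijective G hbij).symm (G q) = q from Equiv.symm_apply_apply _ q, ← heq]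
  fin_cases p <;> fin_cases q <;>
    · show nineA c a b d _ _ ↔ _
      simp only [nineA, dirW3, digraphOfPairs, G]
      simp [nca, ncb, ncd, nab, nad, nbd,
        nca.symm, ncb.symm, ncd.symm, nab.symm, nad.symm, nbd.symm]
      all_goals decide
/-- A semi-complete digraph containing the bidirected star `↔S4` as a
subdigraph is 3-dicritical if and only if it is isomorphic to the directed wheel `W3`. -/
theorem dicritical3_of_contains_biS4
    {V : Type} [Fintype V] (D : SimpleDigraph V) (hsc : D.SemiComplete)
    (hS4 : D.ContainsSub biS4) :
    D.Dicritical3 ↔ D.Iso dirW3 := by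
  obtain ⟨f, finj, hmap⟩ := hS4
  have hcx : D.Adj (f 0) (f 1) := hmap 0 1 (by decide)
  have hxc : D.Adj (f 1) (f 0) := hmap 1 0 (by decide)
  have hcy : D.Adj (f 0) (f 2) := hmap 0 2 (by decide)
  have hyc : D.Adj (f 2) (f 0) := hmap 2 0 (by decide)
  have hcz : D.Adj (f 0) (f 3) := hmap 0 3 (by decide)
  have hzc : D.Adj (f 3) (f 0) := hmap 3 0 (by decide)
  have n01 : f 0 ≠ f 1 := fun h => absurd (finj h) (by decide)
  have n02 : f 0 ≠ f 2 := fun h => absurd (finj h) (by decide)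
  have n03 : f 0 ≠ f 3 := fun h => absurd (finj h) (by decide)
  have n12 : f 1 ≠ f 2 := fun h => absurd (finj h) (by decide)
  have n13 : f 1 ≠ f 3 := fun h => absurd (finj h) (by decide)
  have n23 : f 2 ≠ f 3 := fun h => absurd (finj h) (by decide)
  constructor
  · rintro ⟨hnc, hdel⟩
    rcases hsc (f 1) (f 2) n12 with hxy | hyx <;>
      rcases hsc (f 2) (f 3) n23 with hyz | hzy <;>
      rcases hsc (f 1) (f 3) n13 with hxz | hzx
    · exact absurd (trans_case D hnc hdel (f 0) (f 1) (f 2) (f 3)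
        hcx hxc hcy hyc hcz hzc hxy hyz hxz n01 n03 n12 n23) id
    · exact cyc_case D hsc hdel (f 0) (f 1) (f 2) (f 3)
        hcx hxc hcy hyc hcz hzc hxy hyz hzx n01 n02 n03 n12 n13 n23
    · exact absurd (trans_case D hnc hdel (f 0) (f 1) (f 3) (f 2)
        hcx hxc hcz hzc hcy hyc hxz hzy hxy n01 n02 n13 (Ne.symm n23)) id
    · exact absurd (trans_case D hnc hdel (f 0) (f 3) (f 1) (f 2)
        hcz hzc hcx hxc hcy hyc hzx hxy hzy n03 n02 (Ne.symm n13) n12) id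
    · exact absurd (trans_case D hnc hdel (f 0) (f 2) (f 1) (f 3)
        hcy hyc hcx hxc hcz hzc hyx hxz hyz n02 n03 (Ne.symm n12) n13) id
    · exact absurd (trans_case D hnc hdel (f 0) (f 2) (f 3) (f 1)
        hcy hyc hcz hzc hcx hxc hyz hzx hyx n02 n01 n23 (Ne.symm n13)) id
    · exact cyc_case D hsc hdel (f 0) (f 1) (f 3) (f 2)
        hcx hxc hcz hzc hcy hyc hxz hzy hyx n01 n03 n02 n13 n12 (Ne.symm n23)
    · exact absurd (trans_case D hnc hdel (f 0) (f 3) (f 2) (f 1)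
        hcz hzc hcy hyc hcx hxc hzy hyx hzx n03 n01 (Ne.symm n23) (Ne.symm n12)) id
  · rintro ⟨e, he⟩
    have had : ∀ p q : Fin 4, dirW3.Adj p q → D.Adj (e.symm p) (e.symm q) := by
      intro p q h
      rw [he (e.symm p) (e.symm q), e.apply_symm_apply, e.apply_symm_apply]
      exact h
    have hne : ∀ p q : Fin 4, p ≠ q → e.symm p ≠ e.symm q :=
      fun p q h h' => h (e.symm.injective h')
    constructor
    · exact pattern_not_col (c := e.symm 3) (a := e.symm 0) (b := e.symm 1) (d := e.symm 2)
        (had 3 0 (by decide)) (had 0 3 (by decide)) (had 3 1 (by decide)) (had 1 3 (by decide))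
        (had 3 2 (by decide)) (had 2 3 (by decide)) (had 0 1 (by decide)) (had 1 2 (by decide))
        (had 2 0 (by decide))
    · intro S A hsub hprop
      have hmiss : ∃ u v, D.Adj u v ∧ ¬ A u v := by
        rcases hprop with hS | hA
        · obtain ⟨v, hv⟩ : ∃ v, v ∉ S := by
            by_contra h
            push_neg at h
            exact hS (Set.eq_univ_iff_forall.2 h)
          have hout : ∀ p : Fin 4, ∃ q, dirW3.Adj p q := by decide
          obtain ⟨q, hq⟩ := hout (e v)
          refine ⟨v, e.symm q, ?_, fun hA' => hv (hsub _ _ hA').1⟩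
          rw [he v (e.symm q), e.apply_symm_apply]
          exact hq
        · by_contra h
          push_neg at h
          apply hA
          funext u v
          exact propext ⟨fun h' => (hsub u v h').2.2, fun hD => h u v hD⟩
      obtain ⟨u, v, hD, hnA⟩ := hmiss
      have hApq : ∀ x y, A x y →
          (fun r s => dirW3.Adj r s ∧ ¬(r = e u ∧ s = e v)) (e x) (e y) := by
        intro x y h1
        refine ⟨(he x y).1 (hsub _ _ h1).2.2, fun hh => hnA ?_⟩
        have h2 : x = u := e.injective hh.1
        have h3 : y = v := e.injective hh.2
        rw [← h2, ← h3]
        exact h1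
      exact colourable_pullback e hApq (w3_minus_colourable (e u) (e v) ((he u v).1 hD))
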